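/- Let T be a linear transformation of a finite-dimensional real vector space W, diagonalizable with all eigenvalues of absolute value ≠ 1, and let W⁺ ⊆ W be a subspace with zero intersection with the contracting subspace of T. Then there exist constants C > 0 and 0 < c < 1, depending only on T, W⁺ and a fixed norm ‖·‖ on W, such that for all w ∈ W⁺ and all integers 0 ≤ j ≤ k, ‖T^j w‖ ≤ C · c^{k-j} · ‖T^k w‖. -/

import Mathlib

set_option maxHeartbeats 1000000 in
set_option synthInstance.maxHeartbeats 1000000 in
/-- If `W` splits as a direct sum of eigenspaces of `T` with eigenvalues of absolute value `≠ 1`,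
and `W⁺ ⊆ W` meets the contracting subspace only in `0`, then there are constants `C > 0` and
`0 < c < 1` such that `‖T^j w‖ ≤ C · c^{k-j} · ‖T^k w‖` for all `w ∈ W⁺` and `0 ≤ j ≤ k`. -/
theorem generic_growth
    (W : Type*) [NormedAddCommGroup W] [NormedSpace ℝ W] [FiniteDimensional ℝ W]
    (T : W →ₗ[ℝ] W)
    (hdiag : (⨆ μ ∈ {μ : ℝ | |μ| ≠ 1}, Module.End.eigenspace T μ) = ⊤)
    (Wp : Submodule ℝ W)
    (hWp : Wp ⊓ (⨆ μ ∈ {μ : ℝ | |μ| < 1}, Module.End.eigenspace T μ) = ⊥) :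
    ∃ C c : ℝ, 0 < C ∧ 0 < c ∧ c < 1 ∧
      ∀ w ∈ Wp, ∀ j k : ℕ, j ≤ k →
        ‖(T ^ j) w‖ ≤ C * c ^ (k - j) * ‖(T ^ k) w‖ := by
  classical
  set S : Set ℝ := {μ : ℝ | |μ| ≠ 1} with hS
  have hind : iSupIndep (fun μ : S => Module.End.eigenspace T (μ : ℝ)) :=
    (Module.End.eigenspaces_iSupIndep T).comp Subtype.val_injective
  have htop : (⨆ μ : S, Module.End.eigenspace T (μ : ℝ)) = ⊤ := by
    rw [iSup_subtype]; exact hdiag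
  have hInt : DirectSum.IsInternal (fun μ : S => Module.End.eigenspace T (μ : ℝ)) :=
    DirectSum.isInternal_submodule_of_iSupIndep_of_iSup_eq_top hind htop
  let bs : ∀ μ : S, Module.Basis _ ℝ ↥(Module.End.eigenspace T (μ : ℝ)) :=
    fun μ => Module.Basis.ofVectorSpace ℝ _
  let ι := (μ : S) × ↑(Module.Basis.ofVectorSpaceIndex ℝ ↥(Module.End.eigenspace T (μ : ℝ)))
  let b : Module.Basis ι ℝ W := hInt.collectedBasis bs
  haveI : Fintype ι := FiniteDimensional.fintypeBasisIndex b
  let μ : ι → ℝ := fun i => (i.1 : ℝ)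
  have hμ : ∀ i : ι, |μ i| ≠ 1 := fun i => i.1.2
  have heig : ∀ i : ι, T (b i) = μ i • b i := by
    intro i
    have h := hInt.collectedBasis_mem bs i
    rw [Module.End.mem_eigenspace_iff] at h
    exact h
  have hrepT : ∀ (x : W) (i : ι), b.repr (T x) i = μ i * b.repr x i := by
    have h1 : ∀ i : ι, (b.coord i).comp T = μ i • b.coord i := by
      intro i; apply b.ext; intro j
      simp only [LinearMap.comp_apply, LinearMap.smul_apply, heig j, map_smul,
        Module.Basis.coord_apply, Module.Basis.repr_self, smul_eq_mul]
      rcases eq_or_ne j i with h | h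
      · subst h; rfl
      · simp [Finsupp.single_eq_of_ne' h]
    intro x i
    simpa using LinearMap.congr_fun (h1 i) x
  have hpow : ∀ (m : ℕ) (x : W) (i : ι), b.repr ((T ^ m) x) i = (μ i) ^ m * b.repr x i := by
    intro m; induction m with
    | zero => intro x i; simp
    | succ n ih =>
      intro x i
      rw [pow_succ', Module.End.mul_apply, hrepT, ih, pow_succ']
      ring
  -- coordinate functional bounds
  let g : ι → ℝ := fun i => ‖(LinearMap.toContinuousLinearMap (b.coord i) : W →L[ℝ] ℝ)‖
  have hg : ∀ (i : ι) (x : W), |b.repr x i| ≤ g i * ‖x‖ := by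
    intro i x
    have h := (LinearMap.toContinuousLinearMap (b.coord i)).le_opNorm x
    simpa [Real.norm_eq_abs] using h
  let G : ℝ := ∑ i, g i
  have hg0 : ∀ i, 0 ≤ g i := fun i => norm_nonneg _
  have hG0 : 0 ≤ G := Finset.sum_nonneg fun i _ => hg0 i
  have hG : ∀ x : W, ∑ i, |b.repr x i| ≤ G * ‖x‖ := by
    intro x
    calc ∑ i, |b.repr x i| ≤ ∑ i, g i * ‖x‖ := Finset.sum_le_sum fun i _ => hg i x
      _ = G * ‖x‖ := by rw [← Finset.sum_mul]
  let B : ℝ := 1 + ∑ i, ‖b i‖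
  have hB1 : (1:ℝ) ≤ B := le_add_of_nonneg_right (Finset.sum_nonneg fun i _ => norm_nonneg _)
  have hB0 : (0:ℝ) ≤ B := zero_le_one.trans hB1
  have hbB : ∀ i : ι, ‖b i‖ ≤ B := by
    intro i
    have h1 : ‖b i‖ ≤ ∑ i, ‖b i‖ :=
      Finset.single_le_sum (fun i _ => norm_nonneg (b i)) (Finset.mem_univ i)
    have hBd : B = 1 + ∑ i : ι, ‖b i‖ := rfl
    rw [hBd]; linarith
  have hB : ∀ x : W, ‖x‖ ≤ B * ∑ i, |b.repr x i| := by
    intro x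
    conv_lhs => rw [← b.sum_repr x]
    calc ‖∑ i, b.repr x i • b i‖ ≤ ∑ i, ‖b.repr x i • b i‖ := norm_sum_le _ _
      _ = ∑ i, |b.repr x i| * ‖b i‖ := by simp [norm_smul, Real.norm_eq_abs]
      _ ≤ ∑ i, |b.repr x i| * B :=
          Finset.sum_le_sum fun i _ => mul_le_mul_of_nonneg_left (hbB i) (abs_nonneg _)
      _ = (∑ i, |b.repr x i|) * B := by rw [Finset.sum_mul]
      _ = B * ∑ i, |b.repr x i| := mul_comm _ _
  -- expanding coordinates
  let P : ι → Prop := fun i => 1 < |μ i|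
  let Ip : Finset ι := Finset.univ.filter P
  have hzero : ∀ w ∈ Wp, (∀ i, P i → b.repr w i = 0) → w = 0 := by
    intro w hw h0
    have hmem : w ∈ (⨆ ν ∈ {ν : ℝ | |ν| < 1}, Module.End.eigenspace T ν) := by
      rw [← b.sum_repr w]
      refine Submodule.sum_mem _ fun i _ => ?_
      by_cases hi : P i
      · rw [h0 i hi]; simpa using Submodule.zero_mem _
      · refine Submodule.smul_mem _ _ ?_
        have hlt : |μ i| < 1 := lt_of_le_of_ne (not_lt.mp hi) (hμ i)
        exact (le_iSup₂ (f := fun (ν : ℝ) (_ : ν ∈ {ν : ℝ | |ν| < 1}) =>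
          Module.End.eigenspace T ν) (μ i) hlt) (hInt.collectedBasis_mem bs i)
    have hmem2 : w ∈ Wp ⊓ (⨆ ν ∈ {ν : ℝ | |ν| < 1}, Module.End.eigenspace T ν) := ⟨hw, hmem⟩
    rw [hWp] at hmem2
    simpa using hmem2
  let f : ↥Wp →ₗ[ℝ] ({i : ι // P i} → ℝ) :=
    LinearMap.pi fun j => (b.coord j.1) ∘ₗ Wp.subtype
  have hker : LinearMap.ker f = ⊥ := by
    rw [LinearMap.ker_eq_bot']
    intro w hw0
    have h0 : ∀ i, P i → b.repr (w : W) i = 0 := by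
      intro i hi
      have h := congrFun hw0 ⟨i, hi⟩
      simpa [f] using h
    exact Subtype.ext (hzero w w.2 h0)
  obtain ⟨K, hK0, hKa⟩ := f.exists_antilipschitzWith hker
  have hanti : ∀ w : ↥Wp, ‖(w : W)‖ ≤ (K : ℝ) * ‖f w‖ := by
    intro w
    have h := hKa.le_mul_dist w 0
    simpa [dist_zero_right, map_zero] using h
  have hfw : ∀ w : ↥Wp, ‖f w‖ ≤ ∑ i ∈ Ip, |b.repr (w : W) i| := by
    intro w
    refine (pi_norm_le_iff_of_nonneg (Finset.sum_nonneg fun i _ => abs_nonneg _)).mpr ?_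
    intro j
    have hmem : j.1 ∈ Ip := Finset.mem_filter.mpr ⟨Finset.mem_univ _, j.2⟩
    have h := Finset.single_le_sum (f := fun i => |b.repr (w : W) i|)
      (fun i _ => abs_nonneg _) hmem
    simpa [f, Real.norm_eq_abs] using h
  -- the contraction constant c
  let c0 : NNReal := Ip.sup fun i => (‖μ i‖₊)⁻¹
  let cN : NNReal := max c0 (1/2)
  let c : ℝ := cN
  have hc0 : 0 < c := by
    have h2 : (1/2 : NNReal) ≤ cN := le_max_right _ _
    have h3 : (0 : NNReal) < 1/2 := by exact_mod_cast (by norm_num : (0:ℝ) < 1/2)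
    exact_mod_cast lt_of_lt_of_le h3 h2
  have hnn : ∀ i ∈ Ip, 1 < ‖μ i‖₊ := by
    intro i hi
    have h := (Finset.mem_filter.mp hi).2
    have h2 : (1:ℝ) < ‖μ i‖ := by rwa [Real.norm_eq_abs]
    exact_mod_cast h2
  have hc1 : c < 1 := by
    have h0 : c0 < 1 := by
      refine (Finset.sup_lt_iff (by norm_num)).mpr ?_
      intro i hi
      exact inv_lt_one_of_one_lt₀ (hnn i hi)
    have hhalf : (1/2 : NNReal) < 1 := by
      exact_mod_cast (by norm_num : (1/2 : ℝ) < 1)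
    have h4 : cN < 1 := max_lt h0 hhalf
    exact_mod_cast h4
  have hcμ : ∀ i ∈ Ip, (1:ℝ) ≤ c * |μ i| := by
    intro i hi
    have h1 : (‖μ i‖₊)⁻¹ ≤ cN := le_trans (Finset.le_sup (f := fun i => (‖μ i‖₊)⁻¹) hi) (le_max_left _ _)
    have hne : ‖μ i‖₊ ≠ 0 := by
      have := hnn i hi; exact ne_of_gt (lt_trans zero_lt_one this)
    have h2 : (1 : NNReal) ≤ cN * ‖μ i‖₊ := by
      calc (1:NNReal) = (‖μ i‖₊)⁻¹ * ‖μ i‖₊ := (inv_mul_cancel₀ hne).symm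
        _ ≤ cN * ‖μ i‖₊ := mul_le_mul_left h1 _
    have h3 : (1:ℝ) ≤ (cN : ℝ) * ‖μ i‖ := by exact_mod_cast h2
    rwa [Real.norm_eq_abs] at h3
  -- final constant
  let D : ℝ := B * (G * (K:ℝ) + 1) * G
  have hD0 : (0:ℝ) ≤ D :=
    mul_nonneg (mul_nonneg hB0 (add_nonneg (mul_nonneg hG0 K.coe_nonneg) zero_le_one)) hG0
  refine ⟨D + 1, c, by linarith, hc0, hc1, ?_⟩
  intro w hw j k hjk
  set a : ι → ℝ := fun i => |b.repr w i| with ha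
  have ha0 : ∀ i, 0 ≤ a i := fun i => abs_nonneg _
  have hrep : ∀ (m : ℕ) (i : ι), |b.repr ((T ^ m) w) i| = |μ i| ^ m * a i := by
    intro m i; rw [hpow m w i, abs_mul, abs_pow]
  have hckj : c ^ k ≤ c ^ (k - j) := pow_le_pow_of_le_one hc0.le hc1.le (Nat.sub_le k j)
  have hSk : ∑ i ∈ Ip, |μ i| ^ k * a i ≤ G * ‖(T ^ k) w‖ := by
    calc ∑ i ∈ Ip, |μ i| ^ k * a i = ∑ i ∈ Ip, |b.repr ((T ^ k) w) i| :=
          Finset.sum_congr rfl fun i _ => (hrep k i).symm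
      _ ≤ ∑ i, |b.repr ((T ^ k) w) i| :=
          Finset.sum_le_sum_of_subset_of_nonneg (Finset.subset_univ _)
            (fun i _ _ => abs_nonneg _)
      _ ≤ G * ‖(T ^ k) w‖ := hG _
  have hexp : ∑ i ∈ Ip, a i ≤ c ^ (k - j) * ∑ i ∈ Ip, |μ i| ^ k * a i := by
    rw [Finset.mul_sum]
    refine Finset.sum_le_sum fun i hi => ?_
    have h1 : (1:ℝ) ≤ c * |μ i| := hcμ i hi
    have h5 : (1:ℝ) ≤ c ^ (k - j) * |μ i| ^ k := by
      calc (1:ℝ) ≤ (c * |μ i|) ^ k := one_le_pow₀ h1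
        _ = c ^ k * |μ i| ^ k := mul_pow _ _ _
        _ ≤ c ^ (k - j) * |μ i| ^ k :=
            mul_le_mul_of_nonneg_right hckj (pow_nonneg (abs_nonneg _) k)
    calc a i = 1 * a i := (one_mul _).symm
      _ ≤ (c ^ (k - j) * |μ i| ^ k) * a i := mul_le_mul_of_nonneg_right h5 (ha0 i)
      _ = c ^ (k - j) * (|μ i| ^ k * a i) := by ring
  have hexp2 : ∑ i ∈ Ip, |μ i| ^ j * a i ≤ c ^ (k - j) * ∑ i ∈ Ip, |μ i| ^ k * a i := by
    rw [Finset.mul_sum]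
    refine Finset.sum_le_sum fun i hi => ?_
    have h1 : (1:ℝ) ≤ c * |μ i| := hcμ i hi
    have habs0 : (0:ℝ) ≤ |μ i| := abs_nonneg _
    have hkey : (1:ℝ) ≤ (c * |μ i|) ^ (k - j) := one_le_pow₀ h1
    have hsplit : |μ i| ^ k = |μ i| ^ (k - j) * |μ i| ^ j := by
      rw [← pow_add, Nat.sub_add_cancel hjk]
    calc |μ i| ^ j * a i = 1 * (|μ i| ^ j * a i) := (one_mul _).symm
      _ ≤ (c * |μ i|) ^ (k - j) * (|μ i| ^ j * a i) :=
          mul_le_mul_of_nonneg_right hkey (mul_nonneg (pow_nonneg habs0 _) (ha0 i))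
      _ = c ^ (k - j) * (|μ i| ^ k * a i) := by rw [mul_pow, hsplit]; ring
  have hcon : ∑ i ∈ Finset.univ.filter (fun i => ¬ P i), |μ i| ^ j * a i
      ≤ G * (K:ℝ) * ∑ i ∈ Ip, a i := by
    calc ∑ i ∈ Finset.univ.filter (fun i => ¬ P i), |μ i| ^ j * a i
        ≤ ∑ i ∈ Finset.univ.filter (fun i => ¬ P i), a i := by
          refine Finset.sum_le_sum fun i hi => ?_
          have hle : |μ i| ≤ 1 := not_lt.mp (Finset.mem_filter.mp hi).2
          have h6 : |μ i| ^ j ≤ 1 := pow_le_one₀ (abs_nonneg _) hle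
          calc |μ i| ^ j * a i ≤ 1 * a i := mul_le_mul_of_nonneg_right h6 (ha0 i)
            _ = a i := one_mul _
      _ ≤ ∑ i, a i :=
          Finset.sum_le_sum_of_subset_of_nonneg (Finset.subset_univ _)
            (fun i _ _ => ha0 i)
      _ ≤ G * ‖w‖ := hG w
      _ ≤ G * ((K:ℝ) * ‖f ⟨w, hw⟩‖) := mul_le_mul_of_nonneg_left (hanti ⟨w, hw⟩) hG0
      _ ≤ G * ((K:ℝ) * ∑ i ∈ Ip, a i) :=
          mul_le_mul_of_nonneg_left
            (mul_le_mul_of_nonneg_left (hfw ⟨w, hw⟩) K.coe_nonneg) hG0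
      _ = G * (K:ℝ) * ∑ i ∈ Ip, a i := by ring
  have hcpow0 : (0:ℝ) ≤ c ^ (k - j) := pow_nonneg hc0.le _
  have main : ‖(T ^ j) w‖ ≤ D * (c ^ (k - j) * ‖(T ^ k) w‖) := by
    have hsplit2 : ∑ i, |μ i| ^ j * a i
        = ∑ i ∈ Ip, |μ i| ^ j * a i + ∑ i ∈ Finset.univ.filter (fun i => ¬ P i), |μ i| ^ j * a i :=
      (Finset.sum_filter_add_sum_filter_not Finset.univ P _).symm
    have hSkpos : (0:ℝ) ≤ ∑ i ∈ Ip, |μ i| ^ k * a i :=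
      Finset.sum_nonneg fun i _ => mul_nonneg (pow_nonneg (abs_nonneg _) _) (ha0 i)
    calc ‖(T ^ j) w‖ ≤ B * ∑ i, |b.repr ((T ^ j) w) i| := hB _
      _ = B * ∑ i, |μ i| ^ j * a i := by
          congr 1; exact Finset.sum_congr rfl fun i _ => hrep j i
      _ = B * (∑ i ∈ Ip, |μ i| ^ j * a i
            + ∑ i ∈ Finset.univ.filter (fun i => ¬ P i), |μ i| ^ j * a i) := by rw [hsplit2]
      _ ≤ B * (c ^ (k - j) * ∑ i ∈ Ip, |μ i| ^ k * a i
            + G * (K:ℝ) * (c ^ (k - j) * ∑ i ∈ Ip, |μ i| ^ k * a i)) := by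
          refine mul_le_mul_of_nonneg_left (add_le_add hexp2 ?_) hB0
          exact le_trans hcon
            (mul_le_mul_of_nonneg_left hexp (mul_nonneg hG0 K.coe_nonneg))
      _ = B * (G * (K:ℝ) + 1) * (c ^ (k - j) * ∑ i ∈ Ip, |μ i| ^ k * a i) := by ring
      _ ≤ B * (G * (K:ℝ) + 1) * (c ^ (k - j) * (G * ‖(T ^ k) w‖)) := by
          refine mul_le_mul_of_nonneg_left
            (mul_le_mul_of_nonneg_left hSk hcpow0)
            (mul_nonneg hB0 (add_nonneg (mul_nonneg hG0 K.coe_nonneg) zero_le_one))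
      _ = D * (c ^ (k - j) * ‖(T ^ k) w‖) := by ring
  have hfin : D * (c ^ (k - j) * ‖(T ^ k) w‖) ≤ (D + 1) * c ^ (k - j) * ‖(T ^ k) w‖ := by
    have h7 : (0:ℝ) ≤ c ^ (k - j) * ‖(T ^ k) w‖ := mul_nonneg hcpow0 (norm_nonneg _)
    nlinarith [h7]
  exact main.trans hfin
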